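/- Let βⁱ, βʲ > 0 and ν ∈ (0,1), and set t₁ = −(ln ν)/βʲ, so that ν = e^{−βʲ t₁}. Then for every t ∈ [0, t₁]: (βʲ/(βⁱ+βʲ)) e^{−(βⁱ+βʲ)t} ≥ e^{−βⁱ t₁} ( ν − (βⁱ/(βⁱ+βʲ)) e^{−βʲ t₁} ). (Key inequality, with equality at t = t₁, from Case 1 of the proof of the paper's Theorem 2, establishing that the HJB maximizer equals βⁱ on [0,t₁].) -/
import Mathlib


open Real Set

/-- Key inequality from Case 1 of the proof of the paper's Theorem 2: with
`t₁ = −(ln ν)/βʲ` (so that `ν = e^{−βʲ t₁}`), for every `t ∈ [0, t₁]`,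
`(βʲ/(βⁱ+βʲ)) e^{−(βⁱ+βʲ)t} ≥ e^{−βⁱt₁} (ν − (βⁱ/(βⁱ+βʲ)) e^{−βʲt₁})`,
establishing that the HJB maximizer equals `βⁱ` on `[0,t₁]`. -/
theorem hjb_maximizer_inequality_case1
    (βi βj ν : ℝ) (hβi : 0 < βi) (hβj : 0 < βj) (hν0 : 0 < ν) (hν1 : ν < 1)
    (t₁ : ℝ) (ht₁ : t₁ = -(Real.log ν) / βj) :
    Real.exp (-(βj * t₁)) = ν ∧
    ∀ t ∈ Icc (0:ℝ) t₁,
      βj / (βi + βj) * Real.exp (-((βi + βj) * t))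
        ≥ Real.exp (-(βi * t₁))
            * (ν - βi / (βi + βj) * Real.exp (-(βj * t₁))) := by
  have hsum : 0 < βi + βj := by linarith
  have hkey : -(βj * t₁) = Real.log ν := by
    rw [ht₁]; field_simp
  have hexp : Real.exp (-(βj * t₁)) = ν := by
    rw [hkey, Real.exp_log hν0]
  refine ⟨hexp, fun t ht => ?_⟩
  have hle : t ≤ t₁ := ht.2
  have h1 : Real.exp (-((βi + βj) * t₁)) ≤ Real.exp (-((βi + βj) * t)) := by
    apply Real.exp_le_exp.mpr
    nlinarith
  have hrw : Real.exp (-(βi * t₁)) * (ν - βi / (βi + βj) * Real.exp (-(βj * t₁)))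
      = βj / (βi + βj) * Real.exp (-((βi + βj) * t₁)) := by
    rw [hexp]
    have : Real.exp (-((βi + βj) * t₁)) = Real.exp (-(βi * t₁)) * ν := by
      rw [← hexp, ← Real.exp_add]; ring_nf
    rw [this]
    field_simp
    ring
  rw [hrw]
  have hpos : 0 < βj / (βi + βj) := div_pos hβj hsum
  exact mul_le_mul_of_nonneg_left h1 hpos.le
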